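/- Let P = u0u1…um be a geodesic in a partial cube. If there exists another shortest u0,um-path distinct from P, then there is a convex cycle of the form (u_i u_{i+1} … u_j w_{j−1} w_{j−2} … w_{i+1}) for some 0 ≤ i < j−1 ≤ m−1, where the j−i−1 vertices w_{i+1},…,w_{j−1} do not lie on P. -/

import Mathlib

open SimpleGraph

universe u

variable {V : Type u}

/-- The Djoković–Winkler relation on ordered pairs of vertices:
`ab Θ xy` iff `d(a,x) + d(b,y) ≠ d(a,y) + d(b,x)`. -/
def ThetaV (G : SimpleGraph V) (a b x y : V) : Prop :=
  G.dist a x + G.dist b y ≠ G.dist a y + G.dist b x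

/-- The Djoković–Winkler relation `Θ` on unordered edges. -/
def Theta (G : SimpleGraph V) (e f : Sym2 V) : Prop :=
  ∃ a b x y : V, e = s(a, b) ∧ f = s(x, y) ∧ ThetaV G a b x y

/-- A partial cube: a connected graph isometrically embeddable into a hypercube,
i.e. there is a map to boolean vectors such that graph distance equals Hamming distance. -/
def IsPartialCube (G : SimpleGraph V) : Prop :=
  G.Connected ∧ ∃ (I : Type u) (h : V → I → Bool),
    ∀ u v : V, {i : I | h u i ≠ h v i}.Finite ∧ G.dist u v = {i : I | h u i ≠ h v i}.ncard

/-- A set of vertices is convex if it contains every shortest path between its members. -/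
def IsConvexSet (G : SimpleGraph V) (S : Set V) : Prop :=
  ∀ u ∈ S, ∀ v ∈ S, ∀ p : G.Walk u v, p.length = G.dist u v → ∀ x ∈ p.support, x ∈ S

/-- `W_{uv}`: vertices strictly closer to `u` than to `v`. -/
def Wset (G : SimpleGraph V) (u v : V) : Set V := {w | G.dist u w < G.dist v w}

/-- `U_{uv}`: vertices of `W_{uv}` with a neighbour in `W_{vu}`. -/
def Uset (G : SimpleGraph V) (u v : V) : Set V :=
  {w | w ∈ Wset G u v ∧ ∃ z, G.Adj w z ∧ z ∈ Wset G v u}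

/-- The interval `I(a,b)`: vertices lying on some shortest `a,b`-path. -/
def GInterval (G : SimpleGraph V) (a b : V) : Set V :=
  {x | G.dist a x + G.dist x b = G.dist a b}

/-- An isometric cycle: distances along the cycle agree with distances in `G`. -/
def IsIsometricCycle (G : SimpleGraph V) {u : V} (c : G.Walk u u) : Prop :=
  c.IsCycle ∧ ∀ i j : ℕ, i ≤ c.length → j ≤ c.length →
    G.dist (c.getVert i) (c.getVert j) =
      min (max i j - min i j) (c.length - (max i j - min i j))

/-- A convex cycle: a cycle whose vertex set is convex. -/
def IsConvexCycle (G : SimpleGraph V) {u : V} (c : G.Walk u u) : Prop :=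
  c.IsCycle ∧ IsConvexSet G {x | x ∈ c.support}

/-- `S` and `E` are the vertex set and edge set of an isometric cycle of `G`. -/
def IsIsometricCycleOn (G : SimpleGraph V) (S : Set V) (E : Set (Sym2 V)) : Prop :=
  ∃ (u : V) (c : G.Walk u u), IsIsometricCycle G c ∧
    S = {x | x ∈ c.support} ∧ E = {e | e ∈ c.edges}

/-- `S` and `E` are the vertex set and edge set of a convex cycle of `G`. -/
def IsConvexCycleOn (G : SimpleGraph V) (S : Set V) (E : Set (Sym2 V)) : Prop :=
  ∃ (u : V) (c : G.Walk u u), IsConvexCycle G c ∧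
    S = {x | x ∈ c.support} ∧ E = {e | e ∈ c.edges}

/-- A traverse from the edge `v1u1` to the edge `v2u2`: a sequence of isometric cycles,
given by their vertex sets `S i` and edge sets `E i`, such that `v1u1` lies only on the
first cycle, `v2u2` lies only on the last one, consecutive cycles meet in exactly one
edge which is `Θ`-related to `v1u1`, non-consecutive cycles are disjoint, and a shortest
`v1,v2`-path of `G` runs along the union of the cycles. -/
def IsTraverse (G : SimpleGraph V) (v1 u1 v2 u2 : V) {n : ℕ}
    (S : Fin n → Set V) (E : Fin n → Set (Sym2 V)) : Prop :=
  1 ≤ n ∧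
  (∀ i, IsIsometricCycleOn G (S i) (E i)) ∧
  (∀ i : Fin n, s(v1, u1) ∈ E i ↔ (i : ℕ) = 0) ∧
  (∀ i : Fin n, s(v2, u2) ∈ E i ↔ (i : ℕ) = n - 1) ∧
  (∀ i j : Fin n, (i : ℕ) + 1 = (j : ℕ) →
    ∃ x y : V, G.Adj x y ∧ Theta G s(x, y) s(v1, u1) ∧
      S i ∩ S j = {x, y} ∧ E i ∩ E j = {s(x, y)}) ∧
  (∀ i j : Fin n, (i : ℕ) + 1 < (j : ℕ) → S i ∩ S j = ∅) ∧
  (∃ p : G.Walk v1 v2, p.length = G.dist v1 v2 ∧ ∀ e ∈ p.edges, ∃ i, e ∈ E i)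

/-- A convex traverse: a traverse all of whose cycles are convex. -/
def IsConvexTraverse (G : SimpleGraph V) (v1 u1 v2 u2 : V) {n : ℕ}
    (S : Fin n → Set V) (E : Fin n → Set (Sym2 V)) : Prop :=
  IsTraverse G v1 u1 v2 u2 S E ∧ ∀ i, IsConvexSet G (S i)

/-- Two cycles intertwine if they share a path with at least two edges and all their
other vertices are pairwise distinct. -/
def Intertwine (G : SimpleGraph V) {a b : V} (c1 : G.Walk a a) (c2 : G.Walk b b) : Prop :=
  ∃ (x y : V) (p : G.Walk x y), p.IsPath ∧ 2 ≤ p.length ∧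
    (∀ e ∈ p.edges, e ∈ c1.edges ∧ e ∈ c2.edges) ∧
    {z | z ∈ c1.support} ∩ {z | z ∈ c2.support} = {z | z ∈ p.support}

namespace Stmt10Aux
open scoped symmDiff

variable {V : Type u} {G : SimpleGraph V}

lemma copy_inj {u v u' v' : V} (p q : G.Walk u v) (h1 : u = u') (h2 : v = v')
    (h : p.copy h1 h2 = q.copy h1 h2) : p = q := by
  subst h1; subst h2; simpa using h

lemma ext_getVert {u v : V} (p : G.Walk u v) : ∀ (q : G.Walk u v),
    p.length = q.length → (∀ k, p.getVert k = q.getVert k) → p = q := by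
  induction p with
  | nil => intro q hl _; cases q with
    | nil => rfl
    | cons h q => simp at hl
  | @cons u w1 v h p ih =>
    intro q hl hgv
    cases q with
    | nil => simp at hl
    | @cons _ w2 _ h2 q2 =>
      have hw : w1 = w2 := by
        have := hgv 1
        simpa [SimpleGraph.Walk.getVert_cons_succ, SimpleGraph.Walk.getVert_zero] using this
      subst hw
      have : p = q2 := by
        apply ih
        · simpa using hl
        · intro k; simpa [SimpleGraph.Walk.getVert_cons_succ] using hgv (k+1)
      rw [this]

/-- Take the first `n` edges of a walk. -/
def takeW {u v : V} : (p : G.Walk u v) → (n : ℕ) → G.Walk u (p.getVert n)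
  | .nil, _ => .nil
  | .cons _ _, 0 => .nil
  | .cons h q, (n+1) => .cons h (takeW q n)

/-- Drop the first `n` edges of a walk. -/
def dropW {u v : V} : (p : G.Walk u v) → (n : ℕ) → G.Walk (p.getVert n) v
  | p, 0 => p.copy (SimpleGraph.Walk.getVert_zero p).symm rfl
  | .nil, (_+1) => .nil
  | .cons _ q, (n+1) => dropW q n

lemma takeW_length {u v : V} : ∀ (p : G.Walk u v) (n : ℕ), n ≤ p.length →
    (takeW p n).length = n
  | .nil, n, hn => by simp at hn; simp [takeW, hn]
  | .cons _ _, 0, _ => rfl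
  | .cons h q, (n+1), hn => by
      simp only [takeW, SimpleGraph.Walk.length_cons, Nat.add_le_add_iff_right] at hn ⊢
      exact congrArg (· + 1) (takeW_length q n hn)

lemma takeW_getVert {u v : V} : ∀ (p : G.Walk u v) (n k : ℕ), k ≤ n →
    (takeW p n).getVert k = p.getVert k
  | .nil, n, k, _ => rfl
  | .cons _ _, 0, 0, _ => rfl
  | .cons _ _, 0, (k+1), hk => by omega
  | .cons h q, (n+1), 0, _ => rfl
  | .cons h q, (n+1), (k+1), hk => by
      simpa [takeW, SimpleGraph.Walk.getVert_cons_succ] using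
        takeW_getVert q n k (by omega)

lemma dropW_length {u v : V} : ∀ (p : G.Walk u v) (n : ℕ), n ≤ p.length →
    (dropW p n).length = p.length - n
  | p, 0, _ => by simp [dropW]
  | .nil, (n+1), hn => by simp at hn
  | .cons _ q, (n+1), hn => by
      simpa [dropW] using dropW_length q n (by simpa using hn)

lemma dropW_getVert {u v : V} : ∀ (p : G.Walk u v) (n k : ℕ),
    (dropW p n).getVert k = p.getVert (n + k)
  | p, 0, k => by simp [dropW]
  | .nil, (n+1), k => rfl
  | .cons _ q, (n+1), k => by
      have := dropW_getVert q n k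
      simpa [dropW, SimpleGraph.Walk.getVert_cons_succ, Nat.add_right_comm,
        Nat.succ_add] using this

lemma takeW_append_dropW {u v : V} : ∀ (p : G.Walk u v) (n : ℕ),
    (takeW p n).append (dropW p n) = p
  | .nil, 0 => rfl
  | .nil, (n+1) => rfl
  | .cons h q, 0 => by simp [takeW, dropW]; rfl
  | .cons h q, (n+1) => by
      simpa [takeW, dropW, SimpleGraph.Walk.cons_append] using takeW_append_dropW q n

/-- The subwalk of `p` from index `i` to index `j`. -/
def subWalk {a b : V} (p : G.Walk a b) (i j : ℕ) (hij : i ≤ j) (hj : j ≤ p.length) :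
    G.Walk (p.getVert i) (p.getVert j) :=
  (takeW (dropW p i) (j - i)).copy rfl (by rw [dropW_getVert]; congr 1; omega)

lemma subWalk_length {a b : V} (p : G.Walk a b) (i j : ℕ) (hij : i ≤ j) (hj : j ≤ p.length) :
    (subWalk p i j hij hj).length = j - i := by
  rw [subWalk, SimpleGraph.Walk.length_copy, takeW_length]
  rw [dropW_length p i (by omega)]; omega

lemma subWalk_getVert {a b : V} (p : G.Walk a b) (i j : ℕ) (hij : i ≤ j) (hj : j ≤ p.length)
    {k : ℕ} (hk : k ≤ j - i) : (subWalk p i j hij hj).getVert k = p.getVert (i + k) := by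
  rw [subWalk, SimpleGraph.Walk.getVert_copy, takeW_getVert _ _ _ hk, dropW_getVert]

lemma support_eq_map_getVert {u v : V} : ∀ (p : G.Walk u v),
    p.support = (List.range (p.length + 1)).map p.getVert
  | .nil => rfl
  | .cons h q => by
      conv_rhs => rw [SimpleGraph.Walk.length_cons, List.range_succ_eq_map]
      rw [List.map_cons, List.map_map, SimpleGraph.Walk.support_cons, support_eq_map_getVert q]
      congr 1


lemma edges_eq_map {u v : V} : ∀ (p : G.Walk u v),
    p.edges = (List.range p.length).map (fun k => s(p.getVert k, p.getVert (k+1)))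
  | .nil => rfl
  | .cons h q => by
      conv_rhs => rw [SimpleGraph.Walk.length_cons, List.range_succ_eq_map]
      rw [List.map_cons, List.map_map, SimpleGraph.Walk.edges_cons, edges_eq_map q]
      congr 1
      show s(u, _) = s((Walk.cons h q).getVert 0, (Walk.cons h q).getVert 1)
      rw [SimpleGraph.Walk.getVert_zero, SimpleGraph.Walk.getVert_cons_succ, SimpleGraph.Walk.getVert_zero]


lemma dist_getVert {u v : V} (hconn : G.Connected) (w : G.Walk u v)
    (hw : w.length = G.dist u v) {k l : ℕ} (hkl : k ≤ l) (hl : l ≤ w.length) :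
    G.dist (w.getVert k) (w.getVert l) = l - k := by
  have h1 : G.dist u (w.getVert k) ≤ k := by
    have := SimpleGraph.dist_le (subWalk w 0 k (by omega) (by omega))
    rwa [subWalk_length, SimpleGraph.Walk.getVert_zero, Nat.sub_zero] at this
  have h2 : G.dist (w.getVert k) (w.getVert l) ≤ l - k := by
    have := SimpleGraph.dist_le (subWalk w k l hkl hl)
    rwa [subWalk_length] at this
  have h3 : G.dist (w.getVert l) v ≤ w.length - l := by
    have := SimpleGraph.dist_le (subWalk w l w.length hl le_rfl)
    rwa [subWalk_length, SimpleGraph.Walk.getVert_length] at this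
  have t1 := hconn.dist_triangle (u := u) (v := w.getVert k) (w := v)
  have t2 := hconn.dist_triangle (u := w.getVert k) (v := w.getVert l) (w := v)
  omega

lemma dist_getVert_left {u v : V} (hconn : G.Connected) (w : G.Walk u v)
    (hw : w.length = G.dist u v) {l : ℕ} (hl : l ≤ w.length) :
    G.dist u (w.getVert l) = l := by
  have := dist_getVert hconn w hw (Nat.zero_le l) hl
  rwa [SimpleGraph.Walk.getVert_zero, Nat.sub_zero] at this

lemma walk_unique_of_length_le_one {u v : V} (w1 w2 : G.Walk u v)
    (h1 : w1.length ≤ 1) (hl : w1.length = w2.length) : w1 = w2 := by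
  apply ext_getVert _ _ hl
  intro k
  match k with
  | 0 => simp [SimpleGraph.Walk.getVert_zero]
  | (k+1) =>
    rw [SimpleGraph.Walk.getVert_of_length_le _ (by omega),
      SimpleGraph.Walk.getVert_of_length_le _ (by omega)]





section Sets
variable {α : Type u} {A B : Set α}

lemma sd_of_subset (h : A ⊆ B) : A ∆ B = B \ A := by
  rw [Set.symmDiff_def, Set.diff_eq_empty.mpr h]; exact Set.empty_union _

lemma key_disjoint (hA : A.Finite) (hB : B.Finite)
    (h : (A ∆ B).ncard = A.ncard + B.ncard) : Disjoint A B := by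
  have h1 : (A ∆ B).ncard = (A \ B).ncard + (B \ A).ncard := by
    rw [Set.symmDiff_def]
    exact Set.ncard_union_eq disjoint_sdiff_sdiff hA.diff hB.diff
  have h2 : (A \ B).ncard + (A ∩ B).ncard = A.ncard := by
    rw [← Set.ncard_union_eq Set.disjoint_sdiff_inter hA.diff (hA.inter_of_left _),
      Set.diff_union_inter]
  have h3 : (B \ A).ncard + (B ∩ A).ncard = B.ncard := by
    rw [← Set.ncard_union_eq Set.disjoint_sdiff_inter hB.diff (hB.inter_of_left _),
      Set.diff_union_inter]
  have h4 : (A ∩ B).ncard = 0 := by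
    have : (B ∩ A).ncard = (A ∩ B).ncard := by rw [Set.inter_comm]
    omega
  rw [Set.disjoint_iff_inter_eq_empty]
  exact (Set.ncard_eq_zero (hA.inter_of_left _)).mp h4

lemma empty_symmDiff' (A : Set α) : (∅ : Set α) ∆ A = A := by
  rw [← Set.bot_eq_empty]; exact bot_symmDiff _

lemma symmDiff_empty' (A : Set α) : A ∆ (∅ : Set α) = A := by
  rw [← Set.bot_eq_empty]; exact symmDiff_bot _

lemma symmDiff_finite (hA : A.Finite) (hB : B.Finite) : (A ∆ B).Finite := by
  rw [Set.symmDiff_def]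
  exact hA.diff.union hB.diff

end Sets

lemma ne_setOf_symmDiff {I : Type u} (x u v : I → Bool) :
    {q | u q ≠ v q} = {q | x q ≠ u q} ∆ {q | x q ≠ v q} := by
  ext q'
  simp only [Set.mem_setOf_eq, Set.mem_symmDiff]
  cases h1 : u q' <;> cases h2 : v q' <;> cases h3 : x q' <;> simp

variable {V : Type u} {G : SimpleGraph V}

/-- The data of an isometric embedding into a hypercube, with basepoint deleted. -/
def Good {I : Type u} (G : SimpleGraph V) (φ : V → Set I) : Prop :=
  G.Connected ∧ (∀ z, (φ z).Finite) ∧ ∀ u v, G.dist u v = (φ u ∆ φ v).ncard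

namespace Good

variable {I : Type u} {φ : V → Set I}

lemma conn (hg : Good G φ) : G.Connected := hg.1
lemma fin (hg : Good G φ) : ∀ z, (φ z).Finite := hg.2.1
lemma dist_eq (hg : Good G φ) : ∀ u v, G.dist u v = (φ u ∆ φ v).ncard := hg.2.2

lemma inj (hg : Good G φ) {u v : V} (h : φ u = φ v) : u = v := by
  have : G.dist u v = 0 := by
    rw [hg.dist_eq, h, symmDiff_self]
    simp
  exact (hg.conn.dist_eq_zero_iff).mp this

lemma key (hg : Good G φ) {u v w : V} (hsum : G.dist u v + G.dist v w = G.dist u w) :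
    (φ u ∆ φ v) ⊆ (φ u ∆ φ w) ∧ Disjoint (φ u ∆ φ v) (φ v ∆ φ w) := by
  have htri : φ u ∆ φ w = (φ u ∆ φ v) ∆ (φ v ∆ φ w) := by
    rw [symmDiff_assoc, symmDiff_symmDiff_cancel_left]
  have hd : Disjoint (φ u ∆ φ v) (φ v ∆ φ w) := by
    apply key_disjoint (symmDiff_finite (hg.fin u) (hg.fin v))
      (symmDiff_finite (hg.fin v) (hg.fin w))
    rw [← htri, ← hg.dist_eq, ← hg.dist_eq, ← hg.dist_eq]
    omega
  refine ⟨?_, hd⟩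
  rw [htri, hd.symmDiff_eq_sup]
  exact le_sup_left

end Good

/-- The standing context for the main argument: `p` is a geodesic, `φ` an embedding based
at `p.getVert i`, `δ ≥ 2`, and all pairs of vertices of `p` at distance `< δ` are joined
by a unique geodesic. -/
structure Setup {I : Type u} {a b : V} (G : SimpleGraph V) (φ : V → Set I)
    (p : G.Walk a b) (i δ : ℕ) : Prop where
  good : Good G φ
  geo : p.length = G.dist a b
  hiδ : i + δ ≤ p.length
  hδ2 : 2 ≤ δ
  base : φ (p.getVert i) = ∅
  spu : ∀ k l : ℕ, k ≤ l → l ≤ p.length → l - k < δ →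
      ∀ (g1 g2 : G.Walk (p.getVert k) (p.getVert l)),
        g1.length = G.dist (p.getVert k) (p.getVert l) →
        g2.length = G.dist (p.getVert k) (p.getVert l) → g1 = g2

namespace Setup

variable {I : Type u} {a b : V} {φ : V → Set I} {p : G.Walk a b} {i δ : ℕ}

lemma pd (hs : Setup G φ p i δ) {k l : ℕ} (hkl : k ≤ l) (hl : l ≤ p.length) :
    G.dist (p.getVert k) (p.getVert l) = l - k :=
  dist_getVert hs.good.conn p hs.geo hkl hl

lemma card_eq (hs : Setup G φ p i δ) {z : V} :
    (φ z).ncard = G.dist (p.getVert i) z := by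
  rw [hs.good.dist_eq, hs.base, empty_symmDiff']

lemma Acard (hs : Setup G φ p i δ) {k : ℕ} (hk : k ≤ δ) :
    (φ (p.getVert (i + k))).ncard = k := by
  have hL := hs.hiδ
  rw [hs.card_eq, hs.pd (by omega) (by omega)]
  omega

lemma Asub (hs : Setup G φ p i δ) {k l : ℕ} (hkl : k ≤ l) (hl : l ≤ δ) :
    φ (p.getVert (i + k)) ⊆ φ (p.getVert (i + l)) := by
  have hL := hs.hiδ
  have hsum : G.dist (p.getVert i) (p.getVert (i+k)) +
      G.dist (p.getVert (i+k)) (p.getVert (i+l)) = G.dist (p.getVert i) (p.getVert (i+l)) := by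
    rw [hs.pd (by omega) (by omega), hs.pd (by omega) (by omega), hs.pd (by omega) (by omega)]
    omega
  have := (hs.good.key hsum).1
  rw [hs.base, empty_symmDiff', empty_symmDiff'] at this
  exact this

lemma base0 (hs : Setup G φ p i δ) (z : V) : φ (p.getVert (i + 0)) ⊆ φ z := by
  intro q hq
  rw [Nat.add_zero, hs.base] at hq
  exact absurd hq (Set.notMem_empty q)

/-- The key consequence of unique geodesics between vertices of `p`: any vertex
sandwiched between two `p`-vertices lies on `p`. -/
lemma star (hs : Setup G φ p i δ) {z : V} {k l : ℕ} (hkl : k ≤ l) (hl : l ≤ δ)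
    (hlt : l - k < δ)
    (h1 : φ (p.getVert (i + k)) ⊆ φ z) (h2 : φ z ⊆ φ (p.getVert (i + l))) :
    ∃ s, k ≤ s ∧ s ≤ l ∧ z = p.getVert (i + s) := by
  have hL := hs.hiδ
  have hfz := hs.good.fin z
  have hzn1 : k ≤ (φ z).ncard := by
    have := Set.ncard_le_ncard h1 hfz
    rwa [hs.Acard (by omega)] at this
  have hzn2 : (φ z).ncard ≤ l := by
    have := Set.ncard_le_ncard h2 (hs.good.fin _)
    rwa [hs.Acard hl] at this
  have hd1 : G.dist (p.getVert (i + k)) z = (φ z).ncard - k := by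
    rw [hs.good.dist_eq, sd_of_subset h1, Set.ncard_diff h1 (hs.good.fin _), hs.Acard (by omega)]
  have hd2 : G.dist z (p.getVert (i + l)) = l - (φ z).ncard := by
    rw [hs.good.dist_eq, sd_of_subset h2, Set.ncard_diff h2 hfz, hs.Acard hl]
  obtain ⟨g1, hg1⟩ := hs.good.conn.exists_walk_length_eq_dist (p.getVert (i + k)) z
  obtain ⟨g2, hg2⟩ := hs.good.conn.exists_walk_length_eq_dist z (p.getVert (i + l))
  have hWlen : (g1.append g2).length = G.dist (p.getVert (i + k)) (p.getVert (i + l)) := by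
    rw [SimpleGraph.Walk.length_append, hg1, hg2, hd1, hd2, hs.pd (by omega) (by omega)]
    omega
  have hP2 := subWalk p (i + k) (i + l) (by omega) (by omega)
  have hPlen : (subWalk p (i + k) (i + l) (by omega) (by omega)).length
      = G.dist (p.getVert (i + k)) (p.getVert (i + l)) := by
    rw [subWalk_length, hs.pd (by omega) (by omega)]
  have heq := hs.spu (i + k) (i + l) (by omega) (by omega) (by omega)
    (g1.append g2) (subWalk p (i + k) (i + l) (by omega) (by omega)) hWlen hPlen
  have hzmem : z ∈ (g1.append g2).support := by
    rw [SimpleGraph.Walk.mem_support_append_iff]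
    exact Or.inl g1.end_mem_support
  rw [heq] at hzmem
  rw [SimpleGraph.Walk.mem_support_iff_exists_getVert] at hzmem
  obtain ⟨n, hn, hnle⟩ := hzmem
  rw [subWalk_length] at hnle
  rw [subWalk_getVert _ _ _ _ _ (by omega)] at hn
  exact ⟨k + n, by omega, by omega, by rw [← hn]; congr 1; omega⟩

lemma classify (hs : Setup G φ p i δ) : ∀ n : ℕ, ∀ z : V,
    φ z ⊆ φ (p.getVert (i + δ)) → (φ z).ncard = n →
    (∃ s, s ≤ δ ∧ z = p.getVert (i + s)) ∨
    (1 ≤ n ∧ n ≤ δ - 1 ∧ φ z = φ (p.getVert (i + δ)) \ φ (p.getVert (i + (δ - n)))) := by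
  intro n
  induction n using Nat.strong_induction_on with
  | _ n ih =>
  intro z hzD hzn
  have hL := hs.hiδ
  have hδ2 := hs.hδ2
  have hfz := hs.good.fin z
  have hDfin := hs.good.fin (p.getVert (i + δ))
  have hnδ : n ≤ δ := by
    have := Set.ncard_le_ncard hzD hDfin
    rwa [hzn, hs.Acard le_rfl] at this
  rcases Nat.eq_zero_or_pos n with h0 | hpos
  · left
    refine ⟨0, by omega, hs.good.inj ?_⟩
    have hze : φ z = ∅ := (Set.ncard_eq_zero hfz).mp (h0 ▸ hzn)
    have hb0 : φ (p.getVert (i + 0)) = ∅ := by rw [Nat.add_zero]; exact hs.base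
    rw [hze, hb0]
  rcases eq_or_lt_of_le hnδ with hnδ' | hnδ'
  · left
    refine ⟨δ, le_rfl, hs.good.inj ?_⟩
    apply Set.eq_of_subset_of_ncard_le hzD ?_ hDfin
    rw [hs.Acard le_rfl, hzn]; omega
  -- 1 ≤ n < δ : find a predecessor z' of z in the interval
  obtain ⟨w, hwlen⟩ := hs.good.conn.exists_walk_length_eq_dist (p.getVert i) z
  have hdxz : G.dist (p.getVert i) z = n := by rw [← hs.card_eq]; exact hzn
  have hwl : w.length = n := by rw [hwlen, hdxz]
  set z' := w.getVert (n - 1) with hz'def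
  have hd1 : G.dist (p.getVert i) z' = n - 1 :=
    dist_getVert_left hs.good.conn w hwlen (by rw [hwl]; omega)
  have hd2 : G.dist z' z = 1 := by
    have hwz : w.getVert n = z := by rw [← hwl]; exact w.getVert_length
    have h := dist_getVert hs.good.conn w hwlen (k := n - 1) (l := n)
      (by omega) (by rw [hwl])
    rw [hwz, ← hz'def] at h
    omega
  have hc1 : (φ z').ncard = n - 1 := by rw [hs.card_eq, hd1]
  have hc2 : (φ z' ∆ φ z).ncard = 1 := by rw [← hs.good.dist_eq, hd2]
  obtain ⟨e, he⟩ := Set.ncard_eq_one.mp hc2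
  have hφz : φ z = φ z' ∆ {e} := by rw [← he, symmDiff_symmDiff_cancel_left]
  have henz' : e ∉ φ z' := by
    intro hmem
    have h1 : φ z = φ z' \ {e} := by
      rw [hφz]; ext q; by_cases hq : q = e <;> simp [Set.mem_symmDiff, hq, hmem]
    have : (φ z).ncard = n - 1 - 1 := by
      rw [h1, Set.ncard_diff_singleton_of_mem hmem, hc1]
    omega
  have hins : φ z = insert e (φ z') := by
    rw [hφz]; ext q; by_cases hq : q = e <;> simp [Set.mem_symmDiff, hq, henz']
  have hsub' : φ z' ⊆ φ z := by rw [hins]; exact Set.subset_insert _ _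
  have hez : e ∈ φ z := by rw [hins]; exact Set.mem_insert _ _
  have hz'D : φ z' ⊆ φ (p.getVert (i + δ)) := hsub'.trans hzD
  rcases ih (n - 1) (by omega) z' hz'D hc1 with ⟨s, hsδ, hz'eq⟩ | ⟨hm1, hm2, hz'S⟩
  · -- the predecessor lies on the geodesic
    have hseq : s = n - 1 := by
      have h1 : (φ z').ncard = s := by rw [hz'eq]; exact hs.Acard hsδ
      omega
    subst hseq
    rcases Nat.eq_zero_or_pos (n - 1) with hn1 | hn1
    · -- n = 1
      have hz0 : φ z' = ∅ := by rw [hz'eq, hn1, Nat.add_zero]; exact hs.base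
      have hzsing : φ z = {e} := by rw [hins, hz0]; simp
      by_cases hcase : φ z ⊆ φ (p.getVert (i + (δ - 1)))
      · left
        obtain ⟨s, _, hs2, hz⟩ := hs.star (k := 0) (l := δ - 1) (by omega) (by omega)
          (by omega) (hs.base0 z) hcase
        exact ⟨s, by omega, hz⟩
      · right
        refine ⟨by omega, by omega, ?_⟩
        have hn' : δ - n = δ - 1 := by omega
        rw [hn']
        have hcard : (φ (p.getVert (i + δ)) \ φ (p.getVert (i + (δ - 1)))).ncard = 1 := by
          rw [Set.ncard_diff (hs.Asub (by omega) le_rfl) (hs.good.fin _),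
            hs.Acard le_rfl, hs.Acard (by omega)]
          omega
        obtain ⟨f, hf⟩ := Set.ncard_eq_one.mp hcard
        have heD : e ∈ φ (p.getVert (i + δ)) := hzD hez
        have heA : e ∉ φ (p.getVert (i + (δ - 1))) := by
          intro hx; apply hcase; rw [hzsing]
          intro q hq; rw [Set.mem_singleton_iff] at hq; rwa [hq]
        have hef : e ∈ ({f} : Set I) := by rw [← hf]; exact ⟨heD, heA⟩
        rw [hzsing, hf, Set.mem_singleton_iff.mp hef]
    · -- n ≥ 2
      left
      have hArw : φ (p.getVert (i + (n - 1))) ⊆ φ z := by rw [← hz'eq]; exact hsub'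
      obtain ⟨s, _, hs2, hz⟩ := hs.star (k := n - 1) (l := δ) (by omega) le_rfl
        (by omega) hArw hzD
      exact ⟨s, hs2, hz⟩
  · -- the predecessor is a "suffix" vertex
    right
    have hn2 : 2 ≤ n := by omega
    set κ := δ - (n - 1) with hκ
    have hκ1 : 1 ≤ κ := by omega
    have hκ2 : κ ≤ δ - 1 := by omega
    have heD : e ∈ φ (p.getVert (i + δ)) := hzD hez
    have heA : e ∈ φ (p.getVert (i + κ)) := by
      by_contra hx
      exact henz' (hz'S ▸ (⟨heD, hx⟩ : e ∈ φ (p.getVert (i + δ)) \ φ (p.getVert (i + κ))))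
    set t := sInf {t' : ℕ | e ∈ φ (p.getVert (i + t'))} with htdef
    have hSκ : κ ∈ {t' : ℕ | e ∈ φ (p.getVert (i + t'))} := heA
    have htmem : e ∈ φ (p.getVert (i + t)) := by
      rw [htdef]; exact Nat.sInf_mem ⟨κ, hSκ⟩
    have htκ : t ≤ κ := by rw [htdef]; exact Nat.sInf_le hSκ
    have htpos : 1 ≤ t := by
      rcases Nat.eq_zero_or_pos t with h0 | h1'
      · exfalso
        rw [h0, Nat.add_zero] at htmem
        rw [hs.base] at htmem
        exact htmem
      · exact h1'
    have htmin : e ∉ φ (p.getVert (i + (t - 1))) := by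
      intro hx
      have h2 := Nat.sInf_le (show (t - 1) ∈ {t' : ℕ | e ∈ φ (p.getVert (i + t'))} from hx)
      rw [← htdef] at h2
      omega
    by_cases hteq : t = κ
    · refine ⟨by omega, by omega, ?_⟩
      have hκn : δ - n = κ - 1 := by omega
      rw [hκn]
      have heAκ : e ∈ φ (p.getVert (i + κ)) := heA
      have heAκ1 : e ∉ φ (p.getVert (i + (κ - 1))) := by rw [← hteq]; exact htmin
      have hstepcard : (φ (p.getVert (i + κ)) \ φ (p.getVert (i + (κ - 1)))).ncard = 1 := by
        rw [Set.ncard_diff (hs.Asub (by omega) (by omega)) (hs.good.fin _),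
          hs.Acard (by omega), hs.Acard (by omega)]
        omega
      have hstep : φ (p.getVert (i + κ)) \ φ (p.getVert (i + (κ - 1))) = {e} := by
        symm
        apply Set.eq_of_subset_of_ncard_le
        · intro q hq; rw [Set.mem_singleton_iff] at hq; subst hq; exact ⟨heAκ, heAκ1⟩
        · rw [hstepcard, Set.ncard_singleton]
        · exact (hs.good.fin _).diff
      rw [hins, hz'S]
      ext q
      constructor
      · intro hq
        rcases Set.mem_insert_iff.mp hq with rfl | hq2
        · exact ⟨heD, heAκ1⟩
        · exact ⟨hq2.1, fun hx => hq2.2 (hs.Asub (by omega) (by omega) hx)⟩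
      · rintro ⟨hqD, hqκ1⟩
        by_cases hqκ : q ∈ φ (p.getVert (i + κ))
        · have : q ∈ ({e} : Set I) := hstep ▸ (⟨hqκ, hqκ1⟩ :
            q ∈ φ (p.getVert (i + κ)) \ φ (p.getVert (i + (κ - 1))))
          rw [Set.mem_singleton_iff] at this
          exact this ▸ Set.mem_insert _ _
        · exact Set.mem_insert_iff.mpr (Or.inr ⟨hqD, hqκ⟩)
    · -- t < κ : contradiction
      exfalso
      have htκ' : t < κ := by omega
      have hAtfin := hs.good.fin (p.getVert (i + t))
      have hAtz : φ (p.getVert (i + t)) ∆ φ z =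
          (φ (p.getVert (i + t)) \ {e}) ∪
            (φ (p.getVert (i + δ)) \ φ (p.getVert (i + κ))) := by
        rw [hins, hz'S]
        ext q
        simp only [Set.mem_symmDiff, Set.mem_insert_iff, Set.mem_union, Set.mem_diff,
          Set.mem_singleton_iff]
        constructor
        · rintro (⟨hqt, hqn⟩ | ⟨hqz, hqt⟩)
          · exact Or.inl ⟨hqt, fun hqe => hqn (Or.inl hqe)⟩
          · rcases hqz with rfl | ⟨hqD, hqκ⟩
            · exact absurd htmem hqt
            · exact Or.inr ⟨hqD, hqκ⟩
        · rintro (⟨hqt, hqe⟩ | ⟨hqD, hqκ⟩)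
          · refine Or.inl ⟨hqt, ?_⟩
            rintro (rfl | ⟨_, hqκ⟩)
            · exact hqe rfl
            · exact hqκ (hs.Asub (by omega) (by omega) hqt)
          · exact Or.inr ⟨Or.inr ⟨hqD, hqκ⟩,
              fun hqt => hqκ (hs.Asub (le_of_lt htκ') (by omega) hqt)⟩
      have hcard1 : (φ (p.getVert (i + t)) \ {e}).ncard = t - 1 := by
        rw [Set.ncard_diff_singleton_of_mem htmem, hs.Acard (by omega)]
      have hcard2 : (φ (p.getVert (i + δ)) \ φ (p.getVert (i + κ))).ncard = n - 1 := by
        rw [Set.ncard_diff (hs.Asub (by omega) le_rfl) (hs.good.fin _),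
          hs.Acard le_rfl, hs.Acard (by omega)]
        omega
      have hdisj : Disjoint (φ (p.getVert (i + t)))
          (φ (p.getVert (i + δ)) \ φ (p.getVert (i + κ))) := by
        rw [Set.disjoint_left]
        intro q hq hq2
        exact hq2.2 (hs.Asub (by omega) (by omega) hq)
      have hcardAtz : (φ (p.getVert (i + t)) ∆ φ z).ncard = t - 1 + (n - 1) := by
        rw [hAtz, Set.ncard_union_eq (hdisj.mono_left Set.diff_subset) hAtfin.diff
          (hs.good.fin _).diff, hcard1, hcard2]
      have hdtz : G.dist (p.getVert (i + t)) z = t - 1 + (n - 1) := by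
        rw [hs.good.dist_eq, hcardAtz]
      obtain ⟨g, hg⟩ := hs.good.conn.exists_walk_length_eq_dist (p.getVert (i + t)) z
      have hglen : g.length = t - 1 + (n - 1) := by rw [hg, hdtz]
      set u1 := g.getVert 1 with hu1def
      have hdtu : G.dist (p.getVert (i + t)) u1 = 1 := by
        have h := dist_getVert hs.good.conn g hg (k := 0) (l := 1) (by omega)
          (by rw [hglen]; omega)
        rwa [SimpleGraph.Walk.getVert_zero, Nat.sub_zero] at h
      have hduz : G.dist u1 z = t - 1 + (n - 1) - 1 := by
        have h := dist_getVert hs.good.conn g hg (k := 1) (l := g.length)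
          (by rw [hglen]; omega) le_rfl
        rwa [SimpleGraph.Walk.getVert_length, hglen] at h
      have hsingle : (φ (p.getVert (i + t)) ∆ φ u1).ncard = 1 := by
        rw [← hs.good.dist_eq, hdtu]
      obtain ⟨c, hc⟩ := Set.ncard_eq_one.mp hsingle
      have hφu1 : φ u1 = φ (p.getVert (i + t)) ∆ {c} := by
        rw [← hc, symmDiff_symmDiff_cancel_left]
      have hcmem : c ∈ φ (p.getVert (i + t)) ∆ φ z := by
        by_contra hcn
        have hswap : φ u1 ∆ φ z = (φ (p.getVert (i + t)) ∆ φ z) ∆ {c} := by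
          rw [hφu1, symmDiff_assoc, symmDiff_assoc, symmDiff_comm {c} (φ z)]
        have hinsz : φ u1 ∆ φ z = insert c (φ (p.getVert (i + t)) ∆ φ z) := by
          rw [hswap]; ext q; by_cases hq : q = c <;> simp [Set.mem_symmDiff, hq, hcn]
        have hcnt : (φ u1 ∆ φ z).ncard = t - 1 + (n - 1) + 1 := by
          rw [hinsz, Set.ncard_insert_of_notMem hcn (symmDiff_finite hAtfin hfz), hcardAtz]
        have h2 : (φ u1 ∆ φ z).ncard = t - 1 + (n - 1) - 1 := by
          rw [← hs.good.dist_eq, hduz]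
        omega
      rw [hAtz, Set.mem_union] at hcmem
      rcases hcmem with hc1m | hc2m
      · -- c ∈ A t \ {e}
        have hcAt : c ∈ φ (p.getVert (i + t)) := hc1m.1
        have hcne : c ≠ e := by simpa using hc1m.2
        have hφu1' : φ u1 = φ (p.getVert (i + t)) \ {c} := by
          rw [hφu1]; ext q; by_cases hq : q = c <;> simp [Set.mem_symmDiff, hq, hcAt]
        obtain ⟨s, _, hsle, hueq⟩ := hs.star (k := 0) (l := t) (by omega) (by omega)
          (by omega) (hs.base0 u1)
          (by rw [hφu1']; exact Set.diff_subset)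
        have hcards : s = t - 1 := by
          have h1 : (φ u1).ncard = s := by rw [hueq]; exact hs.Acard (by omega)
          have h2 : (φ u1).ncard = t - 1 := by
            rw [hφu1', Set.ncard_diff_singleton_of_mem hcAt, hs.Acard (by omega)]
          omega
        have hAA : φ (p.getVert (i + t)) \ {c} = φ (p.getVert (i + (t - 1))) := by
          rw [← hφu1', hueq, hcards]
        apply htmin
        rw [← hAA]
        exact ⟨htmem, by simpa using (Ne.symm hcne)⟩
      · -- c ∈ D \ A κ
        have hcD := hc2m.1
        have hcκ := hc2m.2
        have hcAt : c ∉ φ (p.getVert (i + t)) :=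
          fun hx => hcκ (hs.Asub (by omega) (by omega) hx)
        have hφu1' : φ u1 = insert c (φ (p.getVert (i + t))) := by
          rw [hφu1]; ext q; by_cases hq : q = c <;> simp [Set.mem_symmDiff, hq, hcAt]
        obtain ⟨s, hsge, hsle, hueq⟩ := hs.star (k := t) (l := δ) (by omega) le_rfl
          (by omega) (by rw [hφu1']; exact Set.subset_insert _ _)
          (by rw [hφu1']; exact Set.insert_subset hcD (hs.Asub (by omega) le_rfl))
        have hcards : s = t + 1 := by
          have h1 : (φ u1).ncard = s := by rw [hueq]; exact hs.Acard hsle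
          have h2 : (φ u1).ncard = t + 1 := by
            rw [hφu1', Set.ncard_insert_of_notMem hcAt hAtfin, hs.Acard (by omega)]
          omega
        apply hcκ
        apply hs.Asub (show t + 1 ≤ κ by omega) (by omega)
        have : c ∈ φ u1 := by rw [hφu1']; exact Set.mem_insert _ _
        rwa [hueq, hcards] at this

lemma rho (hs : Setup G φ p i δ) (r : G.Walk (p.getVert i) (p.getVert (i + δ)))
    (hrlen : r.length = G.dist (p.getVert i) (p.getVert (i + δ)))
    (hrne : r ≠ subWalk p i (i + δ) (Nat.le_add_right i δ) hs.hiδ)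
    {m : ℕ} (hm1 : 1 ≤ m) (hm2 : m ≤ δ - 1) :
    φ (r.getVert m) = φ (p.getVert (i + δ)) \ φ (p.getVert (i + (δ - m))) := by
  have hL := hs.hiδ
  have hδ2 := hs.hδ2
  have hrδ : r.length = δ := by
    rw [hrlen, hs.pd (by omega) (by omega)]; omega
  have hdx : G.dist (p.getVert i) (r.getVert m) = m :=
    dist_getVert_left hs.good.conn r hrlen (by rw [hrδ]; omega)
  have hdy : G.dist (r.getVert m) (p.getVert (i + δ)) = δ - m := by
    have h := dist_getVert hs.good.conn r hrlen (k := m) (l := r.length)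
      (by rw [hrδ]; omega) le_rfl
    rwa [SimpleGraph.Walk.getVert_length, hrδ] at h
  have hsum : G.dist (p.getVert i) (r.getVert m) +
      G.dist (r.getVert m) (p.getVert (i + δ)) =
      G.dist (p.getVert i) (p.getVert (i + δ)) := by
    rw [hdx, hdy, hs.pd (by omega) (by omega)]; omega
  have hsubD : φ (r.getVert m) ⊆ φ (p.getVert (i + δ)) := by
    have h := (hs.good.key hsum).1
    rw [hs.base, empty_symmDiff', empty_symmDiff'] at h
    exact h
  have hcard : (φ (r.getVert m)).ncard = m := by rw [hs.card_eq, hdx]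
  rcases hs.classify _ (r.getVert m) hsubD rfl with ⟨s, hsδ, hre⟩ | ⟨_, _, hS⟩
  · exfalso
    have hsm : m = s := by
      have h1 : (φ (r.getVert m)).ncard = s := by rw [hre]; exact hs.Acard hsδ
      omega
    subst hsm
    apply hrne
    have hmr : m ≤ r.length := by rw [hrδ]; omega
    have ht1 : (takeW r m).copy rfl hre = subWalk p i (i + m) (by omega) (by omega) := by
      apply hs.spu i (i + m) (by omega) (by omega) (by omega)
      · rw [SimpleGraph.Walk.length_copy, takeW_length r m hmr,
          hs.pd (by omega) (by omega)]
        omega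
      · rw [subWalk_length, hs.pd (by omega) (by omega)]
    have ht2 : (dropW r m).copy hre rfl = subWalk p (i + m) (i + δ) (by omega) (by omega) := by
      apply hs.spu (i + m) (i + δ) (by omega) (by omega) (by omega)
      · rw [SimpleGraph.Walk.length_copy, dropW_length r m hmr, hrδ,
          hs.pd (by omega) (by omega)]
        omega
      · rw [subWalk_length, hs.pd (by omega) (by omega)]
    apply ext_getVert
    · rw [hrδ, subWalk_length]; omega
    intro k
    rcases le_or_gt k m with hk | hk
    · have e1 : r.getVert k = (takeW r m).getVert k := (takeW_getVert r m k hk).symm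
      have e2 : (takeW r m).getVert k = ((takeW r m).copy rfl hre).getVert k := by
        rw [SimpleGraph.Walk.getVert_copy]
      rw [e1, e2, ht1, subWalk_getVert _ _ _ _ _ (by omega),
        subWalk_getVert _ _ _ _ _ (by omega)]
    · rcases le_or_gt k δ with hkδ | hkδ
      · have e1 : r.getVert k = (dropW r m).getVert (k - m) := by
          rw [dropW_getVert]; congr 1; omega
        have e2 : ((dropW r m).copy hre rfl).getVert (k - m)
            = (dropW r m).getVert (k - m) := SimpleGraph.Walk.getVert_copy _ _ _ _
        rw [e1, ← e2, ht2, subWalk_getVert _ _ _ _ _ (by omega),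
          subWalk_getVert _ _ _ _ _ (by omega)]
        congr 1
        omega
      · have e3 : r.getVert k = p.getVert (i + δ) :=
          SimpleGraph.Walk.getVert_of_length_le r (by rw [hrδ]; omega)
        have e4 : (subWalk p i (i + δ) (Nat.le_add_right i δ) hs.hiδ).getVert k
            = p.getVert (i + δ) :=
          SimpleGraph.Walk.getVert_of_length_le _ (by rw [subWalk_length]; omega)
        exact e3.trans e4.symm
  · rw [hcard] at hS
    exact hS

end Setup

end Stmt10Aux

open scoped symmDiff in
/-- if `P` is a geodesic in a partial cube and there is another shortest
path with the same endpoints, then there is a convex cycle consisting of a subpath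
`u_i…u_j` of `P` together with `j−i−1` vertices not on `P`. -/
theorem stmt10 (G : SimpleGraph V) (h : IsPartialCube G) {a b : V}
    (p : G.Walk a b) (hp : p.IsPath) (hgeo : p.length = G.dist a b)
    (q : G.Walk a b) (hq : q.IsPath) (hql : q.length = G.dist a b) (hne : q ≠ p) :
    ∃ i j : ℕ, i + 1 < j ∧ j ≤ p.length ∧
      ∃ c : G.Walk (p.getVert i) (p.getVert i), IsConvexCycle G c ∧
        c.length = 2 * (j - i) ∧
        (∀ k ≤ j - i, c.getVert k = p.getVert (i + k)) ∧
        (∀ x ∈ c.support, x ∈ p.support → ∃ k, i ≤ k ∧ k ≤ j ∧ x = p.getVert k) := by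
  classical
  obtain ⟨hconn, I, hb, hIprop⟩ := h
  set T : Set ℕ := {d | ∃ i j : ℕ, j ≤ p.length ∧ i + d = j ∧
      ∃ w1 w2 : G.Walk (p.getVert i) (p.getVert j),
        w1.length = G.dist (p.getVert i) (p.getVert j) ∧
        w2.length = G.dist (p.getVert i) (p.getVert j) ∧ w1 ≠ w2} with hTdef
  have hd0 : G.dist (p.getVert 0) (p.getVert p.length) = G.dist a b := by
    rw [p.getVert_zero, p.getVert_length]
  have hTne : T.Nonempty := by
    refine ⟨p.length, 0, p.length, le_rfl, by omega,
      p.copy (p.getVert_zero).symm (p.getVert_length).symm,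
      q.copy (p.getVert_zero).symm (p.getVert_length).symm, ?_, ?_, ?_⟩
    · rw [SimpleGraph.Walk.length_copy, hd0]; exact hgeo
    · rw [SimpleGraph.Walk.length_copy, hd0]; exact hql
    · intro hc
      exact hne (Stmt10Aux.copy_inj p q _ _ hc).symm
  set δ := sInf T with hδdef
  have hδT : δ ∈ T := by rw [hδdef]; exact Nat.sInf_mem hTne
  have hmin : ∀ d ∈ T, δ ≤ d := by intro d hd; rw [hδdef]; exact Nat.sInf_le hd
  obtain ⟨i, j, hjm, hij, w1, w2, hw1len, hw2len, hww⟩ := hδT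
  subst hij
  have hδpd : G.dist (p.getVert i) (p.getVert (i + δ)) = δ := by
    have := Stmt10Aux.dist_getVert hconn p hgeo (k := i) (l := i + δ) (by omega) hjm
    omega
  have hδ2 : 2 ≤ δ := by
    by_contra hlt
    push_neg at hlt
    apply hww
    apply Stmt10Aux.walk_unique_of_length_le_one
    · rw [hw1len, hδpd]; omega
    · rw [hw1len, hw2len]
  -- the embedding relative to the basepoint `p.getVert i`
  set φ : V → Set I := fun z => {q' | hb (p.getVert i) q' ≠ hb z q'} with hφdef
  have hgood : Stmt10Aux.Good G φ := by
    refine ⟨hconn, fun z => (hIprop (p.getVert i) z).1, fun u v => ?_⟩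
    rw [(hIprop u v).2]
    congr 1
    rw [hφdef]
    exact Stmt10Aux.ne_setOf_symmDiff (hb (p.getVert i)) (hb u) (hb v)
  have hsetup : Stmt10Aux.Setup G φ p i δ := by
    refine ⟨hgood, hgeo, hjm, hδ2, ?_, ?_⟩
    · rw [hφdef]; ext q'; simp
    · intro k l hkl hlm hlt g1 g2 hg1 hg2
      by_contra hgne
      have hdT : (l - k) ∈ T := ⟨k, l, hlm, by omega, g1, g2, hg1, hg2, hgne⟩
      have := hmin _ hdT
      omega
  -- pick a second geodesic `r` distinct from the subwalk `P'` of `p`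
  set P' : G.Walk (p.getVert i) (p.getVert (i + δ)) :=
    Stmt10Aux.subWalk p i (i + δ) (Nat.le_add_right i δ) hjm with hP'def
  have hP'δ : P'.length = δ := by rw [hP'def, Stmt10Aux.subWalk_length]; omega
  obtain ⟨r, hrlen, hrne⟩ : ∃ r : G.Walk (p.getVert i) (p.getVert (i + δ)),
      r.length = G.dist (p.getVert i) (p.getVert (i + δ)) ∧ r ≠ P' := by
    by_cases hcase : w1 = P'
    · exact ⟨w2, hw2len, fun hc => hww (hcase.trans hc.symm)⟩
    · exact ⟨w1, hw1len, hcase⟩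
  have hrδ : r.length = δ := by rw [hrlen, hδpd]
  have hrφ : ∀ m, 1 ≤ m → m ≤ δ - 1 →
      φ (r.getVert m) = φ (p.getVert (i + δ)) \ φ (p.getVert (i + (δ - m))) :=
    fun m hm1 hm2 => hsetup.rho r hrlen hrne hm1 hm2
  -- the cycle
  set c : G.Walk (p.getVert i) (p.getVert i) := P'.append r.reverse with hcdef
  have hclen : c.length = δ + δ := by
    rw [hcdef, SimpleGraph.Walk.length_append, SimpleGraph.Walk.length_reverse, hP'δ, hrδ]
  have hcgv1 : ∀ k, k ≤ δ → c.getVert k = p.getVert (i + k) := by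
    intro k hk
    rw [hcdef, SimpleGraph.Walk.getVert_append]
    by_cases hkδ : k < P'.length
    · rw [if_pos hkδ, hP'def, Stmt10Aux.subWalk_getVert _ _ _ _ _ (by omega)]
    · rw [if_neg hkδ]
      rw [hP'δ] at hkδ
      have hkeq : k - P'.length = 0 := by rw [hP'δ]; omega
      rw [hkeq, SimpleGraph.Walk.getVert_zero]
      congr 1
      omega
  have hcgv2 : ∀ k, δ ≤ k → c.getVert k = r.getVert (δ + δ - k) := by
    intro k hk
    rw [hcdef, SimpleGraph.Walk.getVert_append, if_neg (by rw [hP'δ]; omega),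
      SimpleGraph.Walk.getVert_reverse]
    congr 1
    rw [hrδ, hP'δ]
    omega
  -- distinctness of the two kinds of φ-values
  have hAne : ∀ k m, k ≤ δ → 1 ≤ m → m ≤ δ - 1 →
      φ (p.getVert (i + k)) ≠ φ (p.getVert (i + δ)) \ φ (p.getVert (i + (δ - m))) := by
    intro k m hk hm1 hm2 hne2
    have hkm : k = m := by
      have h1 := hsetup.Acard hk
      have h2 : (φ (p.getVert (i + δ)) \ φ (p.getVert (i + (δ - m)))).ncard = m := by
        rw [Set.ncard_diff (hsetup.Asub (by omega) le_rfl) (hgood.fin _),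
          hsetup.Acard le_rfl, hsetup.Acard (by omega)]
        omega
      rw [hne2, h2] at h1
      omega
    subst hkm
    have h1 : φ (p.getVert (i + 1)) ⊆ φ (p.getVert (i + k)) :=
      hsetup.Asub (by omega) (by omega)
    have h2 : φ (p.getVert (i + 1)) ⊆ φ (p.getVert (i + (δ - k))) :=
      hsetup.Asub (by omega) (by omega)
    have h3 : (φ (p.getVert (i + 1))).Nonempty :=
      Set.nonempty_of_ncard_ne_zero (by rw [hsetup.Acard (by omega)]; omega)
    obtain ⟨q0, hq0⟩ := h3
    have h4 := hne2 ▸ (h1 hq0)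
    exact h4.2 (h2 hq0)
  -- cardinalities along the cycle
  have hNcard : ∀ s, s ≤ δ + δ → (φ (c.getVert s)).ncard = min s (δ + δ - s) := by
    intro s hsb
    rcases le_or_gt s δ with hsδ | hsδ
    · rw [hcgv1 s hsδ, hsetup.Acard hsδ]
      omega
    · rw [hcgv2 s (by omega), hsetup.card_eq,
        Stmt10Aux.dist_getVert_left hconn r hrlen (by rw [hrδ]; omega)]
      omega
  -- injectivity of `getVert` on `[1, 2δ]`
  have hginj : ∀ s t, 1 ≤ s → s ≤ δ + δ → 1 ≤ t → t ≤ δ + δ →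
      c.getVert s = c.getVert t → s = t := by
    intro s t hs1 hs2 ht1 ht2 heq
    have hN : (φ (c.getVert s)).ncard = (φ (c.getVert t)).ncard := by rw [heq]
    rw [hNcard s hs2, hNcard t ht2] at hN
    rcases le_or_gt s δ with hsδ | hsδ <;> rcases le_or_gt t δ with htδ | htδ
    · omega
    · exfalso
      have hst : s = δ + δ - t := by omega
      have hmb : 1 ≤ δ + δ - t ∧ δ + δ - t ≤ δ - 1 := by omega
      apply hAne s (δ + δ - t) hsδ (by omega) (by omega)
      rw [← hcgv1 s hsδ, heq, hcgv2 t (by omega), hrφ (δ + δ - t) (by omega) (by omega)]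
    · exfalso
      have hmb : 1 ≤ δ + δ - s ∧ δ + δ - s ≤ δ - 1 := by omega
      apply hAne t (δ + δ - s) htδ (by omega) (by omega)
      rw [← hcgv1 t htδ, ← heq, hcgv2 s (by omega), hrφ (δ + δ - s) (by omega) (by omega)]
    · omega
  have hgv0 : c.getVert 0 = c.getVert (δ + δ) := by
    rw [SimpleGraph.Walk.getVert_zero, ← hclen, SimpleGraph.Walk.getVert_length]
  have hkey2 : ∀ s' t', s' ≤ δ + δ → t' ≤ δ + δ → 1 ≤ t' →
      c.getVert s' = c.getVert t' → s' = t' ∨ (s' = 0 ∧ t' = δ + δ) := by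
    intro s' t' hs' ht' ht1 he
    rcases Nat.eq_zero_or_pos s' with rfl | hs1
    · have := hginj (δ + δ) t' (by omega) le_rfl ht1 ht' (by rw [← hgv0]; exact he)
      omega
    · exact Or.inl (hginj s' t' hs1 hs' ht1 ht' he)
  -- the cycle is a cycle
  have hsupTail : c.support.tail.Nodup := by
    have hsup := Stmt10Aux.support_eq_map_getVert c
    rw [hsup, hclen, List.range_succ_eq_map, List.map_cons, List.map_map, List.tail_cons]
    apply List.Nodup.map_on ?_ List.nodup_range
    intro s hsm t htm hfe
    rw [List.mem_range] at hsm htm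
    simp only [Function.comp] at hfe
    have := hginj (s + 1) (t + 1) (by omega) (by omega) (by omega) (by omega) hfe
    omega
  have hedges : c.edges.Nodup := by
    rw [Stmt10Aux.edges_eq_map c, hclen]
    apply List.Nodup.map_on ?_ List.nodup_range
    intro s hsm t htm hfe
    rw [List.mem_range] at hsm htm
    rw [Sym2.eq_iff] at hfe
    rcases hfe with ⟨h1, h2⟩ | ⟨h1, h2⟩
    · have := hkey2 (s + 1) (t + 1) (by omega) (by omega) (by omega) h2
      omega
    · rcases Nat.eq_zero_or_pos t with rfl | ht1
      · have ha := hkey2 (s + 1) (δ + δ) (by omega) le_rfl (by omega)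
          (by rw [← hgv0]; exact h2)
        have hb' : s = 1 ∨ (s = 0 ∧ (0:ℕ) + 1 = δ + δ) := by
          rcases Nat.eq_zero_or_pos s with rfl | hs1
          · have := hkey2 (0 + 1) (δ + δ) (by omega) le_rfl (by omega)
              (by rw [← hgv0, ← h1])
            omega
          · have := hginj s (0 + 1) hs1 (by omega) (by omega) (by omega) h1
            omega
        omega
      · have ha := hkey2 (s + 1) t (by omega) (by omega) ht1 h2
        have hb' : s + 1 = t := by omega
        subst hb'
        rcases Nat.eq_zero_or_pos s with rfl | hs1
        · have := hginj (δ + δ) (0 + 1 + 1) (by omega) le_rfl (by omega) (by omega)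
            (by rw [← hgv0]; exact h1)
          omega
        · have := hginj s (s + 1 + 1) hs1 (by omega) (by omega) (by omega) h1
          omega
  have hcnil : c ≠ SimpleGraph.Walk.nil := by
    intro hnil
    rw [hnil] at hclen
    simp at hclen
    omega
  have hcyc : c.IsCycle := ⟨⟨⟨hedges⟩, hcnil⟩, hsupTail⟩
  -- support characterisation
  have hsupp : ∀ z, z ∈ c.support ↔
      ((∃ k, k ≤ δ ∧ z = p.getVert (i + k)) ∨
        (∃ m, 1 ≤ m ∧ m ≤ δ - 1 ∧ z = r.getVert m)) := by
    intro z
    rw [SimpleGraph.Walk.mem_support_iff_exists_getVert]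
    constructor
    · rintro ⟨n, hgv, hn⟩
      rw [hclen] at hn
      rcases le_or_gt n δ with hnδ | hnδ
      · exact Or.inl ⟨n, hnδ, by rw [← hgv, hcgv1 n hnδ]⟩
      · rcases eq_or_lt_of_le hn with h2δ | h2δ
        · left
          refine ⟨0, by omega, ?_⟩
          rw [← hgv, hcgv2 n (by omega), h2δ, Nat.sub_self,
            SimpleGraph.Walk.getVert_zero, Nat.add_zero]
        · right
          exact ⟨δ + δ - n, by omega, by omega, by rw [← hgv, hcgv2 n (by omega)]⟩
    · rintro (⟨k, hk, rfl⟩ | ⟨m, hm1, hm2, rfl⟩)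
      · exact ⟨k, hcgv1 k hk, by rw [hclen]; omega⟩
      · refine ⟨δ + δ - m, ?_, by rw [hclen]; omega⟩
        rw [hcgv2 (δ + δ - m) (by omega)]
        congr 1
        omega
  have hφD : ∀ z, z ∈ c.support → φ z ⊆ φ (p.getVert (i + δ)) := by
    intro z hz
    rcases (hsupp z).1 hz with ⟨k, hk, rfl⟩ | ⟨m, hm1, hm2, rfl⟩
    · exact hsetup.Asub hk le_rfl
    · rw [hrφ m hm1 hm2]
      exact Set.diff_subset
  -- convexity
  have hconv : IsConvexSet G {z | z ∈ c.support} := by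
    intro u hu v hv g hg z hz
    simp only [Set.mem_setOf_eq] at hu hv ⊢
    have hdadd : G.dist u z + G.dist z v = G.dist u v := by
      have hspec := SimpleGraph.Walk.take_spec g hz
      have hlen : (g.takeUntil z hz).length + (g.dropUntil z hz).length = g.length := by
        rw [← SimpleGraph.Walk.length_append, hspec]
      have h1 := SimpleGraph.dist_le (g.takeUntil z hz)
      have h2 := SimpleGraph.dist_le (g.dropUntil z hz)
      have h3 := hconn.dist_triangle (u := u) (v := z) (w := v)
      omega
    have hsub1 : (φ u ∆ φ z) ⊆ (φ u ∆ φ v) := (hgood.key hdadd).1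
    have hzD : φ z ⊆ φ (p.getVert (i + δ)) := by
      intro q' hq'
      by_cases hqu : q' ∈ φ u
      · exact hφD u hu hqu
      · have h1 : q' ∈ φ u ∆ φ z := Set.mem_symmDiff.mpr (Or.inr ⟨hq', hqu⟩)
        have h2 := hsub1 h1
        rw [Set.mem_symmDiff] at h2
        rcases h2 with ⟨hqu', _⟩ | ⟨hqv, _⟩
        · exact absurd hqu' hqu
        · exact hφD v hv hqv
    rcases hsetup.classify _ z hzD rfl with ⟨s, hsδ, rfl⟩ | ⟨hm1, hm2, hS⟩
    · exact (hsupp _).2 (Or.inl ⟨s, hsδ, rfl⟩)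
    · have hzr : z = r.getVert ((φ z).ncard) :=
        hgood.inj (by rw [hrφ _ hm1 hm2, ← hS])
      exact (hsupp z).2 (Or.inr ⟨_, hm1, hm2, hzr⟩)
  -- final assembly
  refine ⟨i, i + δ, by omega, hjm, c, ⟨hcyc, hconv⟩, ?_, ?_, ?_⟩
  · rw [hclen]; omega
  · intro k hk
    exact hcgv1 k (by omega)
  · intro z hzc hzp
    rcases (hsupp z).1 hzc with ⟨k, hk, rfl⟩ | ⟨m, hm1, hm2, rfl⟩
    · exact ⟨i + k, by omega, by omega, rfl⟩
    · exfalso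
      rw [SimpleGraph.Walk.mem_support_iff_exists_getVert] at hzp
      obtain ⟨l, hgvl, hlm⟩ := hzp
      have hφl : φ (p.getVert l) = φ (p.getVert (i + δ)) \ φ (p.getVert (i + (δ - m))) := by
        rw [hgvl, hrφ m hm1 hm2]
      have hScard : (φ (p.getVert l)).ncard = m := by
        rw [hφl, Set.ncard_diff (hsetup.Asub (by omega) le_rfl) (hgood.fin _),
          hsetup.Acard le_rfl, hsetup.Acard (by omega)]
        omega
      rcases lt_or_ge l i with hli | hli
      · have hsum : G.dist (p.getVert l) (p.getVert i) +
            G.dist (p.getVert i) (p.getVert (i + δ)) =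
            G.dist (p.getVert l) (p.getVert (i + δ)) := by
          rw [hsetup.pd (by omega) (by omega), hsetup.pd (by omega) (by omega),
            hsetup.pd (by omega) (by omega)]
          omega
        have hdisj := (hgood.key hsum).2
        rw [hsetup.base, Stmt10Aux.symmDiff_empty', Stmt10Aux.empty_symmDiff'] at hdisj
        have hne' : (φ (p.getVert l)).Nonempty :=
          Set.nonempty_of_ncard_ne_zero (by rw [hScard]; omega)
        obtain ⟨q0, hq0⟩ := hne'
        have hq0D : q0 ∈ φ (p.getVert (i + δ)) := by
          rw [hφl] at hq0
          exact hq0.1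
        exact Set.disjoint_left.mp hdisj hq0 hq0D
      · rcases le_or_gt l (i + δ) with hlj | hlj
        · exact hAne (l - i) m (by omega) hm1 hm2
            (by rw [show i + (l - i) = l by omega]; exact hφl)
        · have hbig : (φ (p.getVert l)).ncard = l - i := by
            rw [hsetup.card_eq, hsetup.pd (by omega) (by omega)]
          omega
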